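/- (Full optimality of greedy budget allocation.) Let n ≥ 1, integers k_min ≤ k_max, and budget B with n·k_min ≤ B ≤ n·k_max. Let E : Fin n → ℤ → ℝ be such that each E i is strictly decreasing and discretely convex on [k_min, k_max]. Then any feasible allocation T (k_min ≤ T i ≤ k_max, ∑ i T i = B) satisfying ΔE_i(T i) ≤ ΔE_j(T j - 1) for all valid pairs (i with T i < k_max, j with T j > k_min) is a global minimizer of ∑ i, E i (T i) over the feasible set; moreover such an allocation exists. -/

import Mathlib

lemma two_update_sum {n : ℕ} {M : Type*} [AddCommGroup M] (f : Fin n → ℤ → M) (T : Fin n → ℤ)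
    {i j : Fin n} (hij : i ≠ j) (a b : ℤ) :
    ∑ k, f k (Function.update (Function.update T i a) j b k)
      = ∑ k, f k (T k) + (f i a - f i (T i)) + (f j b - f j (T j)) := by
  have key : ∑ k, (f k (Function.update (Function.update T i a) j b k) - f k (T k))
      = ∑ k ∈ ({i, j} : Finset (Fin n)), (f k (Function.update (Function.update T i a) j b k) - f k (T k)) := by
    refine (Finset.sum_subset (Finset.subset_univ _) ?_).symm
    intro x _ hx
    simp only [Finset.mem_insert, Finset.mem_singleton, not_or] at hx
    rw [Function.update_of_ne hx.2, Function.update_of_ne hx.1, sub_self]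
  rw [Finset.sum_pair hij] at key
  have hi : Function.update (Function.update T i a) j b i = a := by
    rw [Function.update_of_ne hij, Function.update_self]
  have hj : Function.update (Function.update T i a) j b j = b := Function.update_self _ _ _
  rw [hi, hj] at key
  have hsub := Finset.sum_sub_distrib (s := (Finset.univ : Finset (Fin n)))
    (f := fun k => f k (Function.update (Function.update T i a) j b k)) (g := fun k => f k (T k))
  rw [key] at hsub
  have := sub_eq_iff_eq_add.mp hsub.symm
  rw [this]; abel

lemma Dmono {kmin kmax : ℤ} {Ei : ℤ → ℝ}
    (hconv : ∀ k : ℤ, kmin < k → k < kmax → Ei (k + 1) + Ei (k - 1) ≥ 2 * Ei k)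
    {k l : ℤ} (hk : kmin ≤ k) (hkl : k ≤ l) (hl : l < kmax) :
    Ei l - Ei (l + 1) ≤ Ei k - Ei (k + 1) := by
  refine Int.le_induction (motive := fun l _ => l < kmax → Ei l - Ei (l + 1) ≤ Ei k - Ei (k + 1))
    (fun _ => le_refl _) ?_ l hkl hl
  intro l hkl ih hl
  have h1 : l < kmax := by omega
  have h2 := hconv (l + 1) (by omega) hl
  have h3 : Ei (l + 1 + 1) + Ei l ≥ 2 * Ei (l + 1) := by
    have h4 : (l + 1 : ℤ) - 1 = l := by ring
    rw [h4] at h2; exact h2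
  linarith [ih h1]

lemma opt_aux {n : ℕ} (kmin kmax B : ℤ) (E : Fin n → ℤ → ℝ)
    (hconv : ∀ i : Fin n, ∀ k : ℤ, kmin < k → k < kmax →
      E i (k + 1) + E i (k - 1) ≥ 2 * E i k)
    (T : Fin n → ℤ) (hTf : ∀ i, kmin ≤ T i ∧ T i ≤ kmax) (hTs : ∑ i, T i = B)
    (hTopt : ∀ i j : Fin n, T i < kmax → kmin < T j →
        E i (T i) - E i (T i + 1) ≤ E j (T j - 1) - E j (T j)) :
    ∀ m : ℕ, ∀ T' : Fin n → ℤ, (∀ i, kmin ≤ T' i ∧ T' i ≤ kmax) → ∑ i, T' i = B →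
      ∑ i, |T i - T' i| ≤ (m : ℤ) → ∑ i, E i (T i) ≤ ∑ i, E i (T' i) := by
  intro m
  induction m with
  | zero =>
    intro T' _ _ hdist
    have hz : ∀ i, T i = T' i := by
      intro i
      have h1 : ∀ k ∈ (Finset.univ : Finset (Fin n)), (0:ℤ) ≤ |T k - T' k| := fun k _ => abs_nonneg _
      have h2 : |T i - T' i| ≤ ∑ k, |T k - T' k| :=
        Finset.single_le_sum h1 (Finset.mem_univ i)
      have h3 : |T i - T' i| = 0 := le_antisymm (by omega) (abs_nonneg _)
      exact sub_eq_zero.mp (abs_eq_zero.mp h3)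
    exact le_of_eq (Finset.sum_congr rfl (fun i _ => by rw [hz i]))
  | succ m ih =>
    intro T' hT'f hT's hdist
    by_cases heq : ∀ i, T i = T' i
    · exact le_of_eq (Finset.sum_congr rfl (fun i _ => by rw [heq i]))
    · push_neg at heq
      obtain ⟨i0, hi0⟩ := heq
      have hex_i : ∃ i, T i < T' i := by
        by_contra hc
        push_neg at hc
        have hlt : ∑ k, T' k < ∑ k, T k := by
          refine Finset.sum_lt_sum (fun k _ => hc k) ⟨i0, Finset.mem_univ i0, ?_⟩
          have := hc i0; omega
        omega
      have hex_j : ∃ j, T' j < T j := by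
        by_contra hc
        push_neg at hc
        have hlt : ∑ k, T k < ∑ k, T' k := by
          refine Finset.sum_lt_sum (fun k _ => hc k) ⟨i0, Finset.mem_univ i0, ?_⟩
          have := hc i0; omega
        omega
      obtain ⟨i, hi⟩ := hex_i
      obtain ⟨j, hj⟩ := hex_j
      have hij : i ≠ j := by intro h; rw [h] at hi; omega
      set T'' := Function.update (Function.update T' i (T' i - 1)) j (T' j + 1) with hT''
      have hT''f : ∀ k, kmin ≤ T'' k ∧ T'' k ≤ kmax := by
        intro k
        rcases eq_or_ne k j with rfl | hkj
        · rw [hT'', Function.update_self]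
          have := hT'f k; have := hTf k; omega
        · rw [hT'', Function.update_of_ne hkj]
          rcases eq_or_ne k i with rfl | hki
          · rw [Function.update_self]
            have := hT'f k; have := hTf k; omega
          · rw [Function.update_of_ne hki]; exact hT'f k
      have hsum'' : ∑ k, T'' k = B := by
        rw [hT'', two_update_sum (fun _ x => x) T' hij]
        omega
      have hdist'' : ∑ k, |T k - T'' k| ≤ (m : ℤ) := by
        have h := two_update_sum (fun k x => |T k - x|) T' hij (T' i - 1) (T' j + 1)
        rw [← hT''] at h
        have e1 : |T i - (T' i - 1)| = |T i - T' i| - 1 := by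
          rw [abs_of_nonpos (by omega), abs_of_nonpos (by omega)]; ring
        have e2 : |T j - (T' j + 1)| = |T j - T' j| - 1 := by
          rw [abs_of_nonneg (by omega), abs_of_nonneg (by omega)]; ring
        rw [e1, e2] at h
        have : ∑ k, |T k - T'' k| = ∑ k, |T k - T' k| - 2 := by rw [h]; ring
        push_cast at hdist ⊢
        omega
      have hih := ih T'' hT''f hsum'' hdist''
      have hE : ∑ k, E k (T'' k) ≤ ∑ k, E k (T' k) := by
        have h := two_update_sum (fun k x => E k x) T' hij (T' i - 1) (T' j + 1)
        rw [← hT''] at h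
        -- chain of inequalities
        have c1 : E i (T' i - 1) - E i (T' i - 1 + 1) ≤ E i (T i) - E i (T i + 1) :=
          Dmono (hconv i) (hTf i).1 (by omega) (by have := hT'f i; omega)
        have c2 : E i (T i) - E i (T i + 1) ≤ E j (T j - 1) - E j (T j) :=
          hTopt i j (by have := hT'f i; omega) (by have := hT'f j; omega)
        have c3 : E j (T j - 1) - E j (T j - 1 + 1) ≤ E j (T' j) - E j (T' j + 1) :=
          Dmono (hconv j) (hT'f j).1 (by omega) (by have := hTf j; omega)
        have e1 : (T' i - 1 + 1 : ℤ) = T' i := by ring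
        have e2 : (T j - 1 + 1 : ℤ) = T j := by ring
        rw [e1] at c1
        rw [e2] at c3
        rw [h]
        linarith
      linarith

lemma exists_feasible {n : ℕ} (hn : 1 ≤ n) (kmin kmax B : ℤ)
    (hB1 : (n : ℤ) * kmin ≤ B) (hB2 : B ≤ (n : ℤ) * kmax) :
    ∃ T : Fin n → ℤ, (∀ i, kmin ≤ T i ∧ T i ≤ kmax) ∧ ∑ i, T i = B := by
  have hn0 : (0 : ℤ) < (n : ℤ) := by exact_mod_cast hn
  set q : ℤ := B - (n : ℤ) * kmin with hq
  have hq0 : 0 ≤ q := by omega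
  have hqn : q ≤ (n : ℤ) * (kmax - kmin) := by rw [hq]; ring_nf; omega
  set r : ℤ := q % (n : ℤ) with hr
  have hr0 : 0 ≤ r := Int.emod_nonneg q (ne_of_gt hn0)
  have hrn : r < (n : ℤ) := Int.emod_lt_of_pos q hn0
  have hdm : (n : ℤ) * (q / (n : ℤ)) + r = q := Int.mul_ediv_add_emod q (n : ℤ)
  have hdiv0 : 0 ≤ q / (n : ℤ) := Int.ediv_nonneg hq0 (le_of_lt hn0)
  have hdivle : q / (n : ℤ) ≤ kmax - kmin := by
    have h1 := Int.ediv_le_ediv hn0 hqn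
    rwa [Int.mul_ediv_cancel_left _ (ne_of_gt hn0)] at h1
  refine ⟨fun i => kmin + q / (n : ℤ) + (if (i : ℤ) < r then 1 else 0), ?_, ?_⟩
  · intro i
    dsimp only
    constructor
    · split <;> omega
    · split
      · rename_i hir
        have hri : (1 : ℤ) ≤ r := by have : (0:ℤ) ≤ (i:ℤ) := Int.ofNat_nonneg _; omega
        have hlt : (n : ℤ) * (q / (n : ℤ)) < (n : ℤ) * (kmax - kmin) := by omega
        have := lt_of_mul_lt_mul_left hlt (le_of_lt hn0)
        omega
      · omega
  · rw [Finset.sum_add_distrib, Finset.sum_const, Finset.card_univ, Fintype.card_fin]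
    have hite : ∑ i : Fin n, (if ((i : ℤ) < r) then (1:ℤ) else 0) = r := by
      have hcond : ∀ i : Fin n, ((i : ℤ) < r) ↔ ((i : ℕ) < r.toNat) := by
        intro i; rw [Int.lt_toNat]
      have h1 : ∑ i : Fin n, (if ((i : ℤ) < r) then (1:ℤ) else 0)
          = ∑ i : Fin n, (if ((i : ℕ) < r.toNat) then (1:ℤ) else 0) := by
        refine Finset.sum_congr rfl (fun i _ => ?_)
        simp only [hcond i]
      rw [h1, Fin.sum_univ_eq_sum_range (fun i => if (i < r.toNat) then (1:ℤ) else 0)]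
      have hsub : Finset.range r.toNat ⊆ Finset.range n := by
        apply Finset.range_subset_range.2; omega
      rw [← Finset.sum_subset hsub (fun x _ hx => if_neg (by simpa using hx))]
      rw [Finset.sum_congr rfl (fun x hx => if_pos (Finset.mem_range.mp hx))]
      simp [Int.toNat_of_nonneg hr0]
    rw [hite, nsmul_eq_mul]
    linarith [hdm]


/-- Full optimality of greedy budget allocation: under strict decrease and
discrete convexity of each E i, any feasible allocation satisfying the
exchange-optimality condition is a global minimizer, and such an allocation
exists. -/
theorem stmt11 {n : ℕ} (hn : 1 ≤ n) (kmin kmax B : ℤ) (hk : kmin ≤ kmax)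
    (hB1 : (n : ℤ) * kmin ≤ B) (hB2 : B ≤ (n : ℤ) * kmax)
    (E : Fin n → ℤ → ℝ)
    (hdec : ∀ i : Fin n, ∀ k : ℤ, kmin ≤ k → k < kmax → E i (k + 1) < E i k)
    (hconv : ∀ i : Fin n, ∀ k : ℤ, kmin < k → k < kmax →
      E i (k + 1) + E i (k - 1) ≥ 2 * E i k) :
    (∀ T : Fin n → ℤ, (∀ i, kmin ≤ T i ∧ T i ≤ kmax) → ∑ i, T i = B →
      (∀ i j : Fin n, T i < kmax → kmin < T j →
        E i (T i) - E i (T i + 1) ≤ E j (T j - 1) - E j (T j)) →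
      ∀ T' : Fin n → ℤ, (∀ i, kmin ≤ T' i ∧ T' i ≤ kmax) → ∑ i, T' i = B →
        ∑ i, E i (T i) ≤ ∑ i, E i (T' i)) ∧
    (∃ T : Fin n → ℤ, (∀ i, kmin ≤ T i ∧ T i ≤ kmax) ∧ ∑ i, T i = B ∧
      ∀ i j : Fin n, T i < kmax → kmin < T j →
        E i (T i) - E i (T i + 1) ≤ E j (T j - 1) - E j (T j)) := by
  constructor
  · intro T hTf hTs hTopt T' hT'f hT's
    refine opt_aux kmin kmax B E hconv T hTf hTs hTopt
      ((∑ i, |T i - T' i|).toNat) T' hT'f hT's ?_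
    exact Int.self_le_toNat _
  · -- existence: take a minimizer over the finite nonempty feasible set
    set S : Set (Fin n → ℤ) :=
      {T | (∀ i, kmin ≤ T i ∧ T i ≤ kmax) ∧ ∑ i, T i = B} with hS
    have hfin : S.Finite := by
      have hsub : S ⊆ Set.pi Set.univ (fun _ : Fin n => Set.Icc kmin kmax) := by
        intro T hT i _
        exact ⟨(hT.1 i).1, (hT.1 i).2⟩
      exact (Set.Finite.pi (fun _ => Set.finite_Icc kmin kmax)).subset hsub
    have hne : S.Nonempty := by
      obtain ⟨T, h1, h2⟩ := exists_feasible hn kmin kmax B hB1 hB2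
      exact ⟨T, h1, h2⟩
    obtain ⟨Tm, hTmS, hTmmin⟩ := Set.exists_min_image S (fun T => ∑ i, E i (T i)) hfin hne
    refine ⟨Tm, hTmS.1, hTmS.2, ?_⟩
    intro i j hi hj
    rcases eq_or_ne i j with rfl | hij
    · have h := hconv i (Tm i) hj hi
      linarith
    · set T2 := Function.update (Function.update Tm i (Tm i + 1)) j (Tm j - 1) with hT2
      have hT2S : T2 ∈ S := by
        constructor
        · intro k
          rcases eq_or_ne k j with rfl | hkj
          · rw [hT2, Function.update_self]
            have := hTmS.1 k; omega
          · rw [hT2, Function.update_of_ne hkj]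
            rcases eq_or_ne k i with rfl | hki
            · rw [Function.update_self]
              have := hTmS.1 k; omega
            · rw [Function.update_of_ne hki]; exact hTmS.1 k
        · rw [hT2, two_update_sum (fun _ x => x) Tm hij]
          have := hTmS.2; omega
      have hmin := hTmmin T2 hT2S
      have hsum : ∑ k, E k (T2 k)
          = ∑ k, E k (Tm k) + (E i (Tm i + 1) - E i (Tm i))
            + (E j (Tm j - 1) - E j (Tm j)) := by
        rw [hT2, two_update_sum (fun k x => E k x) Tm hij]
      rw [hsum] at hmin
      linarith
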